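/- Let X be a quasi-Polish space and f : X → Y a continuous open surjection onto a T0 topological space Y. Then Y is quasi-Polish. -/

import Mathlib

open TopologicalSpace Set Topology

/-- A Π⁰₂ set: a countable intersection of sets of the form (complement of open) ∪ open. -/
def IsPi02 {X : Type*} [TopologicalSpace X] (s : Set X) : Prop :=
  ∃ U V : ℕ → Set X, (∀ n, IsOpen (U n)) ∧ (∀ n, IsOpen (V n)) ∧
    s = ⋂ n, ((U n)ᶜ ∪ V n)

/-- A quasi-Polish space: homeomorphic to a Π⁰₂ subspace of 𝕊^ℕ,
where 𝕊 is the Sierpiński space (`Prop` with its topology in Mathlib). -/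
def QuasiPolish (X : Type*) [TopologicalSpace X] : Prop :=
  ∃ s : Set (ℕ → Prop), IsPi02 s ∧ Nonempty (X ≃ₜ s)

namespace QPAux

/-! ### Basic opens in Sierpiński powers -/

/-- The basic open subset of `𝕊^I` given by a finite set of coordinates. -/
def bas {I : Type*} (F : Finset I) : Set (I → Prop) := {p | ∀ i ∈ F, p i}

lemma isOpen_eval {I : Type*} (i : I) : IsOpen {q : I → Prop | q i} :=
  continuous_Prop.mp (continuous_apply i)

lemma isOpen_bas {I : Type*} (F : Finset I) : IsOpen (bas F) := by
  have h : bas F = ⋂ i ∈ F, {p : I → Prop | p i} := by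
    ext p; simp [bas]
  rw [h]
  exact isOpen_biInter_finset fun i _ => isOpen_eval i

lemma bas_anti {I : Type*} {F G : Finset I} (h : F ⊆ G) : bas G ⊆ bas F :=
  fun p hp i hi => hp i (h hi)

lemma mem_of_isOpen_prop {u : Set Prop} (hu : IsOpen u) {a b : Prop}
    (ha : a ∈ u) (hab : a → b) : b ∈ u := by
  by_cases h : a
  · have hb : b = True := eq_true (hab h)
    have ha' : (True : Prop) ∈ u := by rwa [eq_true h] at ha
    rwa [hb]
  · have h2 : u ∈ 𝓝 False := hu.mem_nhds (by rwa [eq_false h] at ha)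
    rw [nhds_false, Filter.mem_top] at h2
    simp [h2]

/-- Every open set of `𝕊^I` containing `p` contains a basic open neighborhood of `p`. -/
lemma exists_bas_subset {I : Type*} {U : Set (I → Prop)} (hU : IsOpen U) {p : I → Prop}
    (hp : p ∈ U) : ∃ F : Finset I, (∀ i ∈ F, p i) ∧ bas F ⊆ U := by
  classical
  obtain ⟨J, u, hu, hsub⟩ := isOpen_pi_iff.mp hU p hp
  refine ⟨J.filter (fun i => p i), fun i hi => (Finset.mem_filter.mp hi).2, fun q hq => hsub ?_⟩
  intro i hi
  have hi' : i ∈ J := Finset.mem_coe.mp hi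
  exact mem_of_isOpen_prop (hu i hi').1 (hu i hi').2
    (fun hpi => hq i (Finset.mem_filter.mpr ⟨hi', hpi⟩))

/-! ### Π⁰₂ helpers -/

lemma isPi02_iInter {X : Type*} [TopologicalSpace X] {I : Type*} [Denumerable I]
    (A B : I → Set X) (hA : ∀ i, IsOpen (A i)) (hB : ∀ i, IsOpen (B i)) :
    IsPi02 (⋂ i, ((A i)ᶜ ∪ B i)) := by
  refine ⟨fun n => A (Denumerable.ofNat I n), fun n => B (Denumerable.ofNat I n),
    fun n => hA _, fun n => hB _, ?_⟩
  apply subset_antisymm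
  · exact fun x hx => mem_iInter.mpr fun n => mem_iInter.mp hx _
  · intro x hx
    refine mem_iInter.mpr fun i => ?_
    simpa [Denumerable.ofNat_encode] using mem_iInter.mp hx (Encodable.encode i)

lemma IsPi02.preimage_homeo {X X' : Type*} [TopologicalSpace X] [TopologicalSpace X']
    (E : X ≃ₜ X') {t : Set X'} (ht : IsPi02 t) : IsPi02 (⇑E ⁻¹' t) := by
  obtain ⟨U, V, hU, hV, rfl⟩ := ht
  exact ⟨fun n => ⇑E ⁻¹' U n, fun n => ⇑E ⁻¹' V n, fun n => (hU n).preimage E.continuous,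
    fun n => (hV n).preimage E.continuous, by simp [preimage_iInter]⟩

/-! ### The main construction -/

variable {Y : Type*} [TopologicalSpace Y] {s : Set (ℕ → Prop)}

/-- The basic open subsets of the subspace `s`. -/
def basS (s : Set (ℕ → Prop)) (F : Finset ℕ) : Set s := {x : s | ∀ i ∈ F, x.1 i}

lemma isOpen_basS (s : Set (ℕ → Prop)) (F : Finset ℕ) : IsOpen (basS s F) :=
  (isOpen_bas F).preimage continuous_subtype_val

/-- Images of basic opens under `f`. -/
def W (f : s → Y) (F : Finset ℕ) : Set Y := f '' basS s F

lemma isOpen_W {f : s → Y} (ho : IsOpenMap f) (F : Finset ℕ) : IsOpen (W f F) :=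
  ho _ (isOpen_basS s F)

/-- The sets `W f F` form a basis of `Y`. -/
lemma exists_W_subset {f : s → Y} (hc : Continuous f) (hsurj : Function.Surjective f)
    {O : Set Y} (hO : IsOpen O) {y : Y} (hy : y ∈ O) :
    ∃ F, y ∈ W f F ∧ W f F ⊆ O := by
  obtain ⟨x, rfl⟩ := hsurj y
  obtain ⟨O₀, hO₀, hpre⟩ := isOpen_induced_iff.mp (hO.preimage hc)
  have hx0 : x.1 ∈ O₀ := by
    have : x ∈ Subtype.val ⁻¹' O₀ := by rw [hpre]; exact hy
    exact this
  obtain ⟨F, hF1, hF2⟩ := exists_bas_subset hO₀ hx0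
  refine ⟨F, ⟨x, hF1, rfl⟩, ?_⟩
  rintro _ ⟨x', hx', rfl⟩
  have : x' ∈ Subtype.val ⁻¹' O₀ := hF2 hx'
  rw [hpre] at this
  exact this

/-- Key extension lemma 1: basic sets can be shrunk inside any open while keeping `y`. -/
lemma key1 {f : s → Y} (hc : Continuous f) {K : Finset ℕ} {y : Y} {O : Set Y}
    (hO : IsOpen O) (hyK : y ∈ W f K) (hyO : y ∈ O) :
    ∃ H, K ⊆ H ∧ W f H ⊆ O ∧ y ∈ W f H := by
  obtain ⟨x, hxK, rfl⟩ := hyK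
  obtain ⟨O₀, hO₀, hpre⟩ := isOpen_induced_iff.mp (hO.preimage hc)
  have hx0 : x.1 ∈ O₀ := by
    have : x ∈ Subtype.val ⁻¹' O₀ := by rw [hpre]; exact hyO
    exact this
  obtain ⟨G, hG1, hG2⟩ := exists_bas_subset hO₀ hx0
  refine ⟨K ∪ G, Finset.subset_union_left, ?_, ⟨x, ?_, rfl⟩⟩
  · rintro _ ⟨x', hx', rfl⟩
    have hx'G : x' ∈ Subtype.val ⁻¹' O₀ := hG2 (fun i hi => hx' i (Finset.mem_union_right _ hi))
    rw [hpre] at hx'G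
    exact hx'G
  · intro i hi
    rcases Finset.mem_union.mp hi with h | h
    · exact hxK i h
    · exact hG1 i h

/-- Key extension lemma 2: handling one Π⁰₂ condition of `s`. -/
lemma key2 {f : s → Y} {U V : ℕ → Set (ℕ → Prop)} (hVo : ∀ n, IsOpen (V n))
    (hseq : s = ⋂ n, ((U n)ᶜ ∪ V n)) {K : Finset ℕ} {n : ℕ} (hKU : bas K ⊆ U n)
    {y : Y} (hyK : y ∈ W f K) :
    ∃ H, K ⊆ H ∧ bas H ⊆ V n ∧ y ∈ W f H := by
  obtain ⟨x, hxK, rfl⟩ := hyK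
  have hxV : x.1 ∈ V n := by
    have hxs : x.1 ∈ ⋂ n, ((U n)ᶜ ∪ V n) := hseq ▸ x.2
    rcases mem_iInter.mp hxs n with h | h
    · exact absurd (hKU hxK) h
    · exact h
  obtain ⟨G, hG1, hG2⟩ := exists_bas_subset (hVo n) hxV
  refine ⟨K ∪ G, Finset.subset_union_left, ?_, ⟨x, ?_, rfl⟩⟩
  · exact (bas_anti Finset.subset_union_right).trans hG2
  · intro i hi
    rcases Finset.mem_union.mp hi with h | h
    · exact hxK i h
    · exact hG1 i h

/-- The embedding of `Y` into `𝕊^(Finset ℕ)`. -/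
def g (f : s → Y) : Y → (Finset ℕ → Prop) := fun y F => y ∈ W f F

section Conditions

variable (f : s → Y) (U V : ℕ → Set (ℕ → Prop))

/-- The index type for the Π⁰₂ conditions. -/
abbrev Idx : Type := Finset ℕ ⊕ ((Finset ℕ × Finset ℕ) ⊕ ((Finset ℕ × Finset ℕ) ⊕ (Finset ℕ × ℕ)))

/-- Eval opens in `𝕊^(Finset ℕ)`. -/
def ev (F : Finset ℕ) : Set (Finset ℕ → Prop) := {q | q F}

lemma isOpen_ev (F : Finset ℕ) : IsOpen (ev F) := isOpen_eval F

open Classical in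
/-- The "hypothesis" open set of each condition. -/
noncomputable def condA : Idx → Set (Finset ℕ → Prop)
  | .inl _ => univ
  | .inr (.inl (G, F)) => if W f G ⊆ W f F then ev G else ∅
  | .inr (.inr (.inl (K, F))) => ev K ∩ ev F
  | .inr (.inr (.inr (K, n))) => if bas K ⊆ U n then ev K else ∅

/-- The "conclusion" open set of each condition. -/
def condB : Idx → Set (Finset ℕ → Prop)
  | .inl _ => ev ∅
  | .inr (.inl (_, F)) => ev F
  | .inr (.inr (.inl (K, F))) => ⋃ H ∈ {H | K ⊆ H ∧ W f H ⊆ W f F}, ev H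
  | .inr (.inr (.inr (K, n))) => ⋃ H ∈ {H | K ⊆ H ∧ bas H ⊆ V n}, ev H

lemma isOpen_condA (i : Idx) : IsOpen (condA f U i) := by
  rcases i with F | ⟨G, F⟩ | ⟨K, F⟩ | ⟨K, n⟩ <;> simp only [condA]
  · exact isOpen_univ
  · split <;> [exact isOpen_ev _; exact isOpen_empty]
  · exact (isOpen_ev _).inter (isOpen_ev _)
  · split <;> [exact isOpen_ev _; exact isOpen_empty]

lemma isOpen_condB (i : Idx) : IsOpen (condB f V i) := by
  rcases i with F | ⟨G, F⟩ | ⟨K, F⟩ | ⟨K, n⟩ <;> simp only [condB]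
  · exact isOpen_ev _
  · exact isOpen_ev _
  · exact isOpen_biUnion fun H _ => isOpen_ev _
  · exact isOpen_biUnion fun H _ => isOpen_ev _

/-- The candidate Π⁰₂ set describing the range of `g f`. -/
def T : Set (Finset ℕ → Prop) := ⋂ i, ((condA f U i)ᶜ ∪ condB f V i)

end Conditions


section RangeEq

variable {Y : Type*} [TopologicalSpace Y] {s : Set (ℕ → Prop)}
  {f : s → Y} {U V : ℕ → Set (ℕ → Prop)}

/-- Every point of the range of `g f` satisfies all the conditions. -/
lemma gy_mem_T (hc : Continuous f) (ho : IsOpenMap f) (hsurj : Function.Surjective f)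
    (hVo : ∀ n, IsOpen (V n)) (hseq : s = ⋂ n, ((U n)ᶜ ∪ V n)) (y : Y) :
    g f y ∈ T f U V := by
  classical
  refine mem_iInter.mpr fun i => ?_
  rcases i with F | ⟨G, F⟩ | ⟨K, F⟩ | ⟨K, n⟩
  · -- q ∅
    right
    obtain ⟨x, hx⟩ := hsurj y
    exact ⟨x, fun i hi => absurd hi (Finset.notMem_empty i), hx⟩
  · -- monotonicity
    simp only [condA, condB]
    split
    · rename_i h
      by_cases hyG : g f y ∈ ev G
      · exact Or.inr (h hyG)
      · exact Or.inl hyG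
    · exact Or.inl (notMem_empty _)
  · -- pair condition
    by_cases hA : g f y ∈ condA f U (.inr (.inr (.inl (K, F))))
    · right
      obtain ⟨hyK, hyF⟩ := hA
      obtain ⟨H, hKH, hWH, hyH⟩ := key1 hc (isOpen_W ho F) hyK hyF
      simp only [condB]
      exact mem_biUnion ⟨hKH, hWH⟩ hyH
    · exact Or.inl hA
  · -- completeness condition
    simp only [condA, condB]
    split
    · rename_i h
      by_cases hyK : g f y ∈ ev K
      · right
        obtain ⟨H, hKH, hHV, hyH⟩ := key2 hVo hseq h hyK
        exact mem_biUnion ⟨hKH, hHV⟩ hyH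
      · exact Or.inl hyK
    · exact Or.inl (notMem_empty _)

/-- Conversely, every point of `T` is in the range of `g f`. -/
lemma T_subset_range (hc : Continuous f) (ho : IsOpenMap f)
    (hUo : ∀ n, IsOpen (U n)) (hseq : s = ⋂ n, ((U n)ᶜ ∪ V n))
    {q : Finset ℕ → Prop} (hq : q ∈ T f U V) : ∃ y, g f y = q := by
  classical
  have hq' : ∀ i, q ∈ (condA f U i)ᶜ ∪ condB f V i := mem_iInter.mp hq
  -- extract the four conditions
  have hq0 : q ∅ := by
    rcases hq' (.inl ∅) with h | h
    · exact absurd (mem_univ _) h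
    · exact h
  have hqM : ∀ G F : Finset ℕ, W f G ⊆ W f F → q G → q F := by
    intro G F hWGF hqG
    rcases hq' (.inr (.inl (G, F))) with h | h
    · exact absurd (by simp only [condA, if_pos hWGF]; exact hqG) h
    · exact h
  have hqP : ∀ K F : Finset ℕ, q K → q F → ∃ H, K ⊆ H ∧ W f H ⊆ W f F ∧ q H := by
    intro K F hqK hqF
    rcases hq' (.inr (.inr (.inl (K, F)))) with h | h
    · exact absurd ⟨hqK, hqF⟩ h
    · simp only [condB, mem_iUnion] at h
      obtain ⟨H, ⟨h1, h2⟩, h3⟩ := h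
      exact ⟨H, h1, h2, h3⟩
  have hqC : ∀ (K : Finset ℕ) (n : ℕ), bas K ⊆ U n → q K →
      ∃ H, K ⊆ H ∧ bas H ⊆ V n ∧ q H := by
    intro K n hKU hqK
    rcases hq' (.inr (.inr (.inr (K, n)))) with h | h
    · exact absurd (by simp only [condA, if_pos hKU]; exact hqK) h
    · simp only [condB, mem_iUnion] at h
      obtain ⟨H, ⟨h1, h2⟩, h3⟩ := h
      exact ⟨H, h1, h2, h3⟩
  -- the one-step extension
  have hstep : ∀ (K : Finset ℕ) (r : ℕ ⊕ Finset ℕ), ∃ K' : Finset ℕ,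
      K ⊆ K' ∧ (q K → q K') ∧
      (∀ n, r = .inl n → bas K ⊆ U n → q K → bas K' ⊆ V n) ∧
      (∀ F, r = .inr F → q F → q K → W f K' ⊆ W f F) := by
    rintro K (n | F)
    · by_cases h : bas K ⊆ U n ∧ q K
      · obtain ⟨H, h1, h2, h3⟩ := hqC K n h.1 h.2
        refine ⟨H, h1, fun _ => h3, ?_, ?_⟩
        · intro n' hn' _ _
          obtain rfl : n = n' := Sum.inl.inj hn'
          exact h2
        · intro F hF; exact nomatch hF
      · refine ⟨K, Finset.Subset.refl K, id, ?_, ?_⟩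
        · intro n' hn' hU' hq''
          obtain rfl : n = n' := Sum.inl.inj hn'
          exact absurd ⟨hU', hq''⟩ h
        · intro F hF; exact nomatch hF
    · by_cases h : q F ∧ q K
      · obtain ⟨H, h1, h2, h3⟩ := hqP K F h.2 h.1
        refine ⟨H, h1, fun _ => h3, ?_, ?_⟩
        · intro n hn; exact nomatch hn
        · intro F' hF' _ _
          obtain rfl : F = F' := Sum.inr.inj hF'
          exact h2
      · refine ⟨K, Finset.Subset.refl K, id, ?_, ?_⟩
        · intro n hn; exact nomatch hn
        · intro F' hF' hqF' hqK
          obtain rfl : F = F' := Sum.inr.inj hF'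
          exact absurd ⟨hqF', hqK⟩ h
  choose step hsub hqstep hVstep hWstep using hstep
  -- the dovetailing sequence of requirements
  set r : ℕ → ℕ ⊕ Finset ℕ :=
    fun m => (Denumerable.eqv (ℕ ⊕ Finset ℕ)).symm (Nat.unpair m).1 with hr
  have hr_hit : ∀ (a : ℕ ⊕ Finset ℕ) (k : ℕ), ∃ m, k ≤ m ∧ r m = a := by
    intro a k
    refine ⟨Nat.pair (Denumerable.eqv (ℕ ⊕ Finset ℕ) a) k, Nat.right_le_pair _ _, ?_⟩
    simp only [hr, Nat.unpair_pair]
    exact Equiv.symm_apply_apply _ a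
  -- the increasing sequence of finsets
  set Fs : ℕ → Finset ℕ := fun m => Nat.rec ∅ (fun m K => step K (r m)) m with hFs
  have hFs0 : Fs 0 = ∅ := rfl
  have hFsS : ∀ m, Fs (m + 1) = step (Fs m) (r m) := fun m => rfl
  have hqFs : ∀ m, q (Fs m) := by
    intro m
    induction m with
    | zero => exact hq0
    | succ m ih => rw [hFsS]; exact hqstep (Fs m) (r m) ih
  have hmono : ∀ k m, k ≤ m → Fs k ⊆ Fs m := by
    intro k m hkm
    induction m with
    | zero => cases Nat.le_zero.mp hkm; exact Finset.Subset.refl _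
    | succ m ih =>
      rcases Nat.lt_or_ge k (m + 1) with h | h
      · exact (ih (Nat.lt_succ_iff.mp h)).trans (by rw [hFsS]; exact hsub _ _)
      · cases Nat.le_antisymm hkm h; exact Finset.Subset.refl _
  -- the limit point
  set p : ℕ → Prop := fun i => ∃ m, i ∈ Fs m with hp
  have hpFs : ∀ m, p ∈ bas (Fs m) := fun m i hi => ⟨m, hi⟩
  have hGbound : ∀ G : Finset ℕ, (∀ i ∈ G, p i) → ∃ k, G ⊆ Fs k := by
    intro G
    induction G using Finset.induction_on with
    | empty => exact fun _ => ⟨0, Finset.empty_subset _⟩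
    | @insert a G' ha ih =>
      intro hG
      obtain ⟨k₁, hk₁⟩ := ih fun i hi => hG i (Finset.mem_insert_of_mem hi)
      obtain ⟨k₂, hk₂⟩ := hG a (Finset.mem_insert_self a G')
      refine ⟨max k₁ k₂, Finset.insert_subset (hmono k₂ _ (le_max_right _ _) hk₂)
        (hk₁.trans (hmono k₁ _ (le_max_left _ _)))⟩
  have hps : p ∈ s := by
    rw [hseq]
    refine mem_iInter.mpr fun n => ?_
    by_cases hpU : p ∈ U n
    · right
      obtain ⟨G, hG, hGU⟩ := exists_bas_subset (hUo n) hpU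
      obtain ⟨k, hk⟩ := hGbound G hG
      obtain ⟨m, hkm, hrm⟩ := hr_hit (.inl n) k
      have h1 : bas (Fs m) ⊆ U n :=
        (bas_anti (hk.trans (hmono k m hkm))).trans hGU
      have h2 : bas (Fs (m + 1)) ⊆ V n := by
        rw [hFsS]
        exact hVstep (Fs m) (r m) n hrm h1 (hqFs m)
      exact h2 (hpFs (m + 1))
    · exact Or.inl hpU
  set x : s := ⟨p, hps⟩ with hx
  refine ⟨f x, funext fun F => ?_⟩
  have hxbas : ∀ m, x ∈ basS s (Fs m) := fun m => hpFs m
  apply propext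
  constructor
  · -- f x ∈ W f F → q F
    intro hgF
    have hWF : IsOpen (W f F) := isOpen_W ho F
    obtain ⟨O₀, hO₀, hpre⟩ := isOpen_induced_iff.mp (hWF.preimage hc)
    have hx0 : x.1 ∈ O₀ := by
      have : x ∈ Subtype.val ⁻¹' O₀ := by rw [hpre]; exact hgF
      exact this
    obtain ⟨G, hG1, hG2⟩ := exists_bas_subset hO₀ hx0
    obtain ⟨k, hk⟩ := hGbound G hG1
    have hWsub : W f (Fs k) ⊆ W f F := by
      rintro _ ⟨x', hx', rfl⟩
      have : x' ∈ Subtype.val ⁻¹' O₀ := hG2 ((bas_anti hk) hx')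
      rw [hpre] at this
      exact this
    exact hqM (Fs k) F hWsub (hqFs k)
  · -- q F → f x ∈ W f F
    intro hqF
    obtain ⟨m, _, hrm⟩ := hr_hit (.inr F) 0
    have hW : W f (Fs (m + 1)) ⊆ W f F := by
      rw [hFsS]
      exact hWstep (Fs m) (r m) F hrm hqF (hqFs m)
    exact hW ⟨x, hxbas (m + 1), rfl⟩

end RangeEq


section Embedding

variable {Y : Type*} [TopologicalSpace Y] {s : Set (ℕ → Prop)} {f : s → Y}

lemma continuous_g (ho : IsOpenMap f) : Continuous (g f) :=
  continuous_pi fun F => continuous_Prop.mpr (isOpen_W ho F)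

lemma isEmbedding_g [T0Space Y] (hc : Continuous f) (ho : IsOpenMap f)
    (hsurj : Function.Surjective f) : IsEmbedding (g f) := by
  refine ⟨⟨le_antisymm (continuous_iff_le_induced.mp (continuous_g ho)) ?_⟩, ?_⟩
  · rw [TopologicalSpace.le_def]
    intro O hO
    show IsOpen[TopologicalSpace.induced (g f) inferInstance] O
    refine (@isOpen_induced_iff Y (Finset ℕ → Prop) _ O (g f)).mpr
      ⟨⋃ F ∈ {F : Finset ℕ | W f F ⊆ O}, ev F,
        isOpen_biUnion fun F _ => isOpen_ev F, ?_⟩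
    ext y
    simp only [mem_preimage, mem_iUnion, mem_setOf_eq, exists_prop]
    constructor
    · rintro ⟨F, hF, hyF⟩
      exact hF hyF
    · intro hy
      obtain ⟨F, h1, h2⟩ := exists_W_subset hc hsurj hO hy
      exact ⟨F, h2, h1⟩
  · intro y₁ y₂ h
    refine Inseparable.eq ?_
    rw [inseparable_iff_forall_isOpen]
    intro O hO
    constructor
    · intro hy
      obtain ⟨F, h1, h2⟩ := exists_W_subset hc hsurj hO hy
      have : g f y₁ F = g f y₂ F := congrFun h F
      exact h2 (by rw [show (y₂ ∈ W f F) = (y₁ ∈ W f F) from this.symm]; exact h1)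
    · intro hy
      obtain ⟨F, h1, h2⟩ := exists_W_subset hc hsurj hO hy
      have : g f y₁ F = g f y₂ F := congrFun h F
      exact h2 (by rw [show (y₁ ∈ W f F) = (y₂ ∈ W f F) from this]; exact h1)

end Embedding

/-- The subtype version of the main theorem. -/
theorem aux_main {Y : Type*} [TopologicalSpace Y] [T0Space Y] (s : Set (ℕ → Prop))
    (hsPi : IsPi02 s) (f : s → Y) (hc : Continuous f) (ho : IsOpenMap f)
    (hsurj : Function.Surjective f) : QuasiPolish Y := by
  classical
  obtain ⟨U, V, hUo, hVo, hseq⟩ := hsPi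
  have hrange : range (g f) = T f U V := by
    apply subset_antisymm
    · rintro _ ⟨y, rfl⟩
      exact gy_mem_T hc ho hsurj hVo hseq y
    · intro q hq
      obtain ⟨y, hy⟩ := T_subset_range hc ho hUo hseq hq
      exact ⟨y, hy⟩
  have hemb := isEmbedding_g hc ho hsurj
  set E : (ℕ → Prop) ≃ₜ (Finset ℕ → Prop) :=
    Homeomorph.piCongrLeft (Y := fun _ : Finset ℕ => Prop) (Denumerable.eqv (Finset ℕ)).symm
    with hE
  have hT : IsPi02 (T f U V) :=
    isPi02_iInter (condA f U) (condB f V) (isOpen_condA f U) (isOpen_condB f V)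
  refine ⟨⇑E ⁻¹' T f U V, IsPi02.preimage_homeo E hT, ⟨?_⟩⟩
  have h1 : Y ≃ₜ range (g f) := hemb.toHomeomorph
  have h2 : (range (g f) : Set _) ≃ₜ T f U V := Homeomorph.setCongr hrange
  have h3 : (T f U V : Set _) ≃ₜ (⇑E.symm '' T f U V) := E.symm.image _
  have h4 : ⇑E.symm '' T f U V = ⇑E ⁻¹' T f U V := by
    ext x
    constructor
    · rintro ⟨t, ht, rfl⟩
      show E (E.symm t) ∈ T f U V
      rw [Homeomorph.apply_symm_apply]
      exact ht
    · intro hx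
      exact ⟨E x, hx, E.symm_apply_apply x⟩
  exact h1.trans (h2.trans (h3.trans (Homeomorph.setCongr h4)))

end QPAux

theorem quasiPolish_of_open_surjection {X Y : Type*} [TopologicalSpace X]
    [TopologicalSpace Y] [T0Space Y] (hX : QuasiPolish X) (f : X → Y)
    (hc : Continuous f) (ho : IsOpenMap f) (hs : Function.Surjective f) :
    QuasiPolish Y := by
  obtain ⟨s, hsPi, ⟨e⟩⟩ := hX
  exact QPAux.aux_main s hsPi (f ∘ ⇑e.symm) (hc.comp e.symm.continuous)
    (ho.comp e.symm.isOpenMap) (hs.comp e.symm.surjective)
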